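/- For every c > 0, every solution X of the time-delay system (S_c) converges to the origin: lim_{t→∞} X(t) = 0. That is, the origin of (S_c) is globally attractive. -/

import Mathlib

open Set Matrix

/-- The matrix `A0`. -/
noncomputable def A0 : Matrix (Fin 2) (Fin 2) ℝ := !![-0.1, 0.5; -2, 0]

/-- The matrix `A1`. -/
noncomputable def A1 : Matrix (Fin 2) (Fin 2) ℝ := !![0, 2; -0.5, -0.1]

/-- The saturation function `φ`. -/
noncomputable def phi (s : ℝ) : ℝ := if s < 0 then 0 else if s ≤ 1 then s else 1

/-- `ℝ²` with the Euclidean norm. -/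
abbrev E2 : Type := EuclideanSpace ℝ (Fin 2)

/-- Action of a `2 × 2` matrix on `ℝ²`. -/
noncomputable def act (A : Matrix (Fin 2) (Fin 2) ℝ) (x : E2) : E2 :=
  Matrix.toEuclideanLin A x

/-- The nonlinearity `g(x,u) = (1+|x|²)(φ(u) A1 + (1-φ(u)) A0) x`. -/
noncomputable def gfun (x : E2) (u : ℝ) : E2 :=
  (1 + ‖x‖ ^ 2) • act (phi u • A1 + (1 - phi u) • A0) x

/-- `X = (x, z1, z2) : [-2,∞) → ℝ² × ℝ × ℝ` is a solution of the time-delay system `(S_c)`. -/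
def IsSolution (c : ℝ) (x : ℝ → E2) (z1 z2 : ℝ → ℝ) : Prop :=
  ContinuousOn x (Ici (-2 : ℝ)) ∧ ContinuousOn z1 (Ici (-2 : ℝ)) ∧
  ContinuousOn z2 (Ici (-2 : ℝ)) ∧
  ∀ t : ℝ, 0 < t →
    HasDerivAt x ((c * phi (z2 (t - 2))) • gfun (x t) (z1 (t - 1))
      + (c * (1 - phi (z2 (t - 2)))) • act A0 (x t)) t
    ∧ HasDerivAt z1 (-(z1 t)) t ∧ HasDerivAt z2 (-(z2 t)) t

/-- Euclidean norm `|X(t)|` of the full state `(x(t), z1(t), z2(t)) ∈ ℝ⁴`. -/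
noncomputable def Xnorm (x : ℝ → E2) (z1 z2 : ℝ → ℝ) (t : ℝ) : ℝ :=
  Real.sqrt (‖x t‖ ^ 2 + (z1 t) ^ 2 + (z2 t) ^ 2)

/-- Norm `‖X0‖ = sup_{τ ∈ [-2,0]} |X(τ)|` of the initial segment of a solution. -/
noncomputable def initNorm (x : ℝ → E2) (z1 z2 : ℝ → ℝ) : ℝ :=
  sSup (Xnorm x z1 z2 '' Icc (-2 : ℝ) 0)

/- ### Auxiliary lemmas -/

lemma phi_eq_min (s : ℝ) : phi s = min 1 (max s 0) := by
  unfold phi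
  rcases lt_or_ge s 0 with h | h
  · simp [h, max_eq_right h.le]
  · rcases le_or_gt s 1 with h1 | h1
    · simp [not_lt.2 h, h1, max_eq_left h, min_eq_right h1]
    · simp [not_lt.2 h, not_le.2 h1, max_eq_left h]; linarith

lemma phi_nonneg (s : ℝ) : 0 ≤ phi s := by
  rw [phi_eq_min]; exact le_min one_pos.le (le_max_right _ _)

lemma phi_le_one (s : ℝ) : phi s ≤ 1 := by
  rw [phi_eq_min]; exact min_le_left _ _

lemma phi_continuous : Continuous phi := by
  have : phi = fun s => min 1 (max s 0) := funext phi_eq_min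
  rw [this]
  exact continuous_const.min (continuous_id.max continuous_const)

lemma phi_zero : phi 0 = 0 := by rw [phi_eq_min]; simp

lemma act_apply (A : Matrix (Fin 2) (Fin 2) ℝ) (y : E2) (i : Fin 2) :
    act A y i = A i 0 * y 0 + A i 1 * y 1 := by
  simp [act, Matrix.toEuclideanLin_apply, Matrix.mulVec, dotProduct, Fin.sum_univ_two]
  fin_cases i <;> rfl

lemma norm_sq_E2 (y : E2) : ‖y‖^2 = y 0^2 + y 1^2 := by
  rw [EuclideanSpace.norm_eq, Real.sq_sqrt (by positivity)]
  simp [Fin.sum_univ_two, sq_abs]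

lemma vx_comp0 (c B u : ℝ) (y : E2) :
    ((c * B) • gfun y u + (c * (1 - B)) • act A0 y) 0
      = (c*B*(1+(y 0^2 + y 1^2))*(1 - phi u) + c*(1-B)) * (-0.1 * y 0 + 0.5 * y 1)
        + (c*B*(1+(y 0^2 + y 1^2))*(phi u)) * (2 * y 1) := by
  show (c * B) * (gfun y u 0) + (c * (1 - B)) * (act A0 y 0) = _
  rw [show gfun y u 0 = (1 + ‖y‖^2) * (act (phi u • A1 + (1 - phi u) • A0) y 0) from rfl,
    act_apply, act_apply, norm_sq_E2]
  simp [A0, A1, Matrix.add_apply, Matrix.smul_apply]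
  ring

lemma vx_comp1 (c B u : ℝ) (y : E2) :
    ((c * B) • gfun y u + (c * (1 - B)) • act A0 y) 1
      = (c*B*(1+(y 0^2 + y 1^2))*(1 - phi u) + c*(1-B)) * (-2 * y 0)
        + (c*B*(1+(y 0^2 + y 1^2))*(phi u)) * (-0.5 * y 0 - 0.1 * y 1) := by
  show (c * B) * (gfun y u 1) + (c * (1 - B)) * (act A0 y 1) = _
  rw [show gfun y u 1 = (1 + ‖y‖^2) * (act (phi u • A1 + (1 - phi u) • A0) y 1) from rfl,
    act_apply, act_apply, norm_sq_E2]
  simp [A0, A1, Matrix.add_apply, Matrix.smul_apply]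
  ring

lemma key_ineq (c B δ a b : ℝ) (hc : 0 < c) (hB0 : 0 ≤ B) (hB1 : B ≤ 1)
    (hδ0 : 0 ≤ δ) (hδ : δ ≤ 1/200) :
    -(c*B*(1+(a^2+b^2))*(1-δ) + c*(1-B)) * (a^2+b^2)
      + (c*B*(1+(a^2+b^2))*δ) * (a^2 + 93.9*a*b - 5.26*b^2)
      ≤ -(c/100) * (25*a^2 - 2*a*b + 6.3*b^2) := by
  set r : ℝ := a^2 + b^2 with hrdef
  set μ : ℝ := c*B*(1+r)*(1-δ) + c*(1-B) with hμdef
  set ν : ℝ := c*B*(1+r)*δ with hνdef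
  have hr : 0 ≤ r := by positivity
  clear_value r
  have hν0 : 0 ≤ ν := by
    rw [hνdef]
    have : (0:ℝ) ≤ 1 + r := by linarith
    positivity
  have hμ : c/2 ≤ μ := by
    rw [hμdef]
    nlinarith [mul_nonneg (mul_nonneg (mul_nonneg hc.le hB0) hr) (by linarith : (0:ℝ) ≤ 1-δ),
      mul_nonneg (mul_nonneg hc.le hB0) (by linarith : (0:ℝ) ≤ 1/2 - δ),
      mul_nonneg hc.le (by linarith : (0:ℝ) ≤ 1 - B)]
  have hνμ : ν ≤ 2*δ*μ := by
    rw [hνdef, hμdef]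
    nlinarith [mul_nonneg (mul_nonneg (mul_nonneg (mul_nonneg hc.le hB0)
        (by linarith : (0:ℝ) ≤ 1+r)) hδ0) (by linarith : (0:ℝ) ≤ 1 - 2*δ),
      mul_nonneg (mul_nonneg hc.le hδ0) (by linarith : (0:ℝ) ≤ 1 - B)]
  clear_value μ ν
  clear hμdef hνdef
  have hq1 : a^2 + 93.9*a*b - 5.26*b^2 ≤ 48*r := by
    rw [hrdef]; nlinarith [sq_nonneg (47*a - 46.95*b), sq_nonneg b]
  have h1 : ν * (a^2 + 93.9*a*b - 5.26*b^2) ≤ ν * (48*r) :=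
    mul_le_mul_of_nonneg_left hq1 hν0
  have hμr : 0 ≤ μ * r := mul_nonneg (by linarith) hr
  have h2 : ν * (48*r) ≤ (2*δ*μ) * (48*r) :=
    mul_le_mul_of_nonneg_right hνμ (by positivity)
  have h3 : (2*δ*μ) * (48*r) ≤ (96/200) * (μ*r) := by
    nlinarith [mul_nonneg hμr (by linarith : (0:ℝ) ≤ 1/200 - δ)]
  have h6 : -μ*r + (96/200)*(μ*r) ≤ -(26/100)*(c*r) := by
    nlinarith [mul_nonneg hr (by linarith : (0:ℝ) ≤ μ - c/2)]
  have h7 : -(26/100)*(c*r) ≤ -(c/100) * (25*a^2 - 2*a*b + 6.3*b^2) := by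
    have h26 : (0:ℝ) ≤ 26*r - (25*a^2 - 2*a*b + 6.3*b^2) := by
      rw [hrdef]; nlinarith [sq_nonneg (a+b)]
    nlinarith [mul_nonneg hc.le h26]
  linarith

open Filter in
lemma zexp (z : ℝ → ℝ) (hz : ∀ t : ℝ, 0 < t → HasDerivAt z (-(z t)) t) :
    ∀ t ≥ (1:ℝ), z t = z 1 * Real.exp (1 - t) := by
  intro t ht
  have key : ∀ s ∈ Icc (1:ℝ) t, z s * Real.exp s = z 1 * Real.exp 1 := by
    apply constant_of_has_deriv_right_zero
    · intro s hs
      have hs0 : (0:ℝ) < s := lt_of_lt_of_le one_pos hs.1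
      exact ((hz s hs0).mul (Real.hasDerivAt_exp s)).continuousAt.continuousWithinAt
    · intro s hs
      have hs0 : (0:ℝ) < s := lt_of_lt_of_le one_pos hs.1
      have h := (hz s hs0).mul (Real.hasDerivAt_exp s)
      have h2 : -z s * Real.exp s + z s * Real.exp s = 0 := by ring
      rw [h2] at h
      exact h.hasDerivWithinAt
  have := key t ⟨ht, le_refl t⟩
  have hexp : Real.exp t ≠ 0 := (Real.exp_pos t).ne'
  rw [Real.exp_sub]
  field_simp at this ⊢
  linarith [this]

open Filter in
lemma ztend (z : ℝ → ℝ) (hz : ∀ t : ℝ, 0 < t → HasDerivAt z (-(z t)) t) :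
    Tendsto z atTop (nhds 0) := by
  have hb : Tendsto (fun t : ℝ => 1 - t) atTop atBot := by
    simpa [sub_eq_add_neg] using
      tendsto_atBot_add_const_left atTop (1:ℝ) tendsto_neg_atTop_atBot
  have h1 : Tendsto (fun t : ℝ => z 1 * Real.exp (1 - t)) atTop (nhds 0) := by
    rw [show (0:ℝ) = z 1 * 0 by ring]
    exact (Real.tendsto_exp_atBot.comp hb).const_mul _
  refine h1.congr' ?_
  filter_upwards [eventually_ge_atTop (1:ℝ)] with t ht
  exact (zexp z hz t ht).symm

open Filter in
/-- Global attractivity of the origin of `(S_c)`: every solution converges to `0`. -/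
theorem stmt_7 (c : ℝ) (hc : 0 < c)
    (x : ℝ → E2) (z1 z2 : ℝ → ℝ) (hsol : IsSolution c x z1 z2) :
    Filter.Tendsto (fun t => (x t, z1 t, z2 t)) Filter.atTop
      (nhds (0, 0, 0)) := by
  obtain ⟨hcx, hcz1, hcz2, hode⟩ := hsol
  have hz1' : ∀ t : ℝ, 0 < t → HasDerivAt z1 (-(z1 t)) t := fun t ht => (hode t ht).2.1
  have hz2' : ∀ t : ℝ, 0 < t → HasDerivAt z2 (-(z2 t)) t := fun t ht => (hode t ht).2.2
  have hz1t : Tendsto z1 atTop (nhds 0) := ztend z1 hz1'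
  have hz2t : Tendsto z2 atTop (nhds 0) := ztend z2 hz2'
  -- the delayed feedback gain tends to 0
  have hδt : Tendsto (fun t : ℝ => phi (z1 (t - 1))) atTop (nhds 0) := by
    have h1 : Tendsto (fun t : ℝ => t - 1) atTop atTop :=
      tendsto_atTop_add_const_right atTop (-1) tendsto_id
    have h2 : Tendsto (fun t : ℝ => z1 (t - 1)) atTop (nhds 0) := hz1t.comp h1
    have := (phi_continuous.tendsto 0).comp h2
    simpa [phi_zero, Function.comp_def] using this
  obtain ⟨T0, hT0⟩ : ∃ T0 : ℝ, ∀ t ≥ T0, phi (z1 (t - 1)) ≤ 1/200 := by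
    have := hδt.eventually (ge_mem_nhds (show (0:ℝ) < 1/200 by norm_num))
    rw [eventually_atTop] at this
    obtain ⟨T0, hT0⟩ := this
    exact ⟨T0, fun t ht => (hT0 t ht)⟩
  set T : ℝ := max T0 1 with hTdef
  have hTpos : (0:ℝ) < T := lt_of_lt_of_le one_pos (le_max_right _ _)
  -- the Lyapunov function
  set V : ℝ → ℝ := fun s => 25*(x s 0)^2 - 2*((x s 0)*(x s 1)) + 6.3*(x s 1)^2 with hVdef
  set k : ℝ := c/100 with hkdef
  set w : ℝ → ℝ := fun s => V s * Real.exp (k*s) with hwdef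
  -- derivative of w, with sign information when the gain is small
  have hwd : ∀ t : ℝ, 0 < t → ∃ d, HasDerivAt w d t ∧
      (phi (z1 (t - 1)) ≤ 1/200 → d ≤ 0) := by
    intro t ht
    have hx := (hode t ht).1
    set B : ℝ := phi (z2 (t - 2)) with hBdef
    set δ : ℝ := phi (z1 (t - 1)) with hδdef
    set A : ℝ := x t 0 with hAdef
    set Bb : ℝ := x t 1 with hBbdef
    set μ : ℝ := c*B*(1+(A^2 + Bb^2))*(1 - δ) + c*(1-B) with hμdef
    set ν : ℝ := c*B*(1+(A^2 + Bb^2))*δ with hνdef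
    have ha' : HasDerivAt (fun s => x s 0)
        (μ * (-0.1 * A + 0.5 * Bb) + ν * (2 * Bb)) t := by
      have h := (EuclideanSpace.proj (𝕜 := ℝ) (0 : Fin 2)).hasFDerivAt.comp_hasDerivAt t hx
      rw [hμdef, hνdef]
      simpa [vx_comp0 c B (z1 (t-1)) (x t), Function.comp_def] using h
    have hb' : HasDerivAt (fun s => x s 1)
        (μ * (-2 * A) + ν * (-0.5 * A - 0.1 * Bb)) t := by
      have h := (EuclideanSpace.proj (𝕜 := ℝ) (1 : Fin 2)).hasFDerivAt.comp_hasDerivAt t hx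
      rw [hμdef, hνdef]
      simpa [vx_comp1 c B (z1 (t-1)) (x t), Function.comp_def] using h
    set a' : ℝ := μ * (-0.1 * A + 0.5 * Bb) + ν * (2 * Bb) with ha'def
    set b' : ℝ := μ * (-2 * A) + ν * (-0.5 * A - 0.1 * Bb) with hb'def
    have hV' : HasDerivAt V
        (25*(2 * A * a') - 2*(a' * Bb + A * b') + 6.3*(2 * Bb * b')) t := by
      rw [hVdef]
      convert (((ha'.pow 2).const_mul (25:ℝ)).sub ((ha'.mul hb').const_mul 2)).add
        ((hb'.pow 2).const_mul (6.3:ℝ)) using 1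
      case e'_5 => rfl
      case e'_8 => rfl
      case e'_4 => rfl
      rw [hAdef, hBbdef]; push_cast; ring
    have hexp' : HasDerivAt (fun s => Real.exp (k*s)) (Real.exp (k*t) * (k*1)) t :=
      (Real.hasDerivAt_exp (k*t)).comp t ((hasDerivAt_id t).const_mul k)
    refine ⟨_, hV'.mul hexp', ?_⟩
    intro hδsmall
    -- the derivative of V is bounded by -k * V t
    have hkey : 25*(2 * A * a') - 2*(a' * Bb + A * b') + 6.3*(2 * Bb * b')
        ≤ -k * V t := by
      have hk := key_ineq c B δ A Bb hc (phi_nonneg _) (phi_le_one _) (phi_nonneg _)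
        (by rw [hδdef]; exact hδsmall)
      have hEq : 25*(2 * A * a') - 2*(a' * Bb + A * b') + 6.3*(2 * Bb * b')
          = -(c*B*(1+(A^2+Bb^2))*(1-δ) + c*(1-B)) * (A^2+Bb^2)
            + (c*B*(1+(A^2+Bb^2))*δ) * (A^2 + 93.9*A*Bb - 5.26*Bb^2) := by
        rw [ha'def, hb'def, hμdef, hνdef]; push_cast; ring
      have hVt : V t = 25*A^2 - 2*A*Bb + 6.3*Bb^2 := by
        rw [hVdef, hAdef, hBbdef]; ring
      rw [hEq, hVt, hkdef]
      linarith [hk]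
    have hEpos : (0:ℝ) < Real.exp (k*t) := Real.exp_pos _
    nlinarith [mul_nonneg (by linarith : (0:ℝ) ≤ -(25*(2 * A * a')
      - 2*(a' * Bb + A * b') + 6.3*(2 * Bb * b') + k * V t)) hEpos.le]
  -- w is antitone on [T, ∞)
  have hanti : AntitoneOn w (Ici T) := by
    apply antitoneOn_of_deriv_nonpos (convex_Ici T)
    · intro t ht
      obtain ⟨d, hd, -⟩ := hwd t (lt_of_lt_of_le hTpos ht)
      exact hd.continuousAt.continuousWithinAt
    · intro t ht
      rw [interior_Ici] at ht
      obtain ⟨d, hd, -⟩ := hwd t (lt_trans hTpos ht)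
      exact hd.differentiableAt.differentiableWithinAt
    · intro t ht
      rw [interior_Ici] at ht
      obtain ⟨d, hd, hdle⟩ := hwd t (lt_trans hTpos ht)
      rw [hd.deriv]
      exact hdle (hT0 t (le_trans (le_max_left _ _) ht.le))
  -- V is sandwiched
  have hVlb : ∀ s : ℝ, (x s 0)^2 + (x s 1)^2 ≤ V s := by
    intro s
    rw [hVdef]
    nlinarith [sq_nonneg (24*(x s 0) - (x s 1)), sq_nonneg (x s 1)]
  have hVub : ∀ t ≥ T, V t ≤ w T * Real.exp (-(k*t)) := by
    intro t ht
    have h := hanti self_mem_Ici ht ht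
    have hE : (0:ℝ) < Real.exp (k*t) := Real.exp_pos _
    have h2 := mul_le_mul_of_nonneg_right h (Real.exp_pos (-(k*t))).le
    calc V t = V t * Real.exp (k*t) * Real.exp (-(k*t)) := by
          rw [mul_assoc, ← Real.exp_add]; simp
      _ = w t * Real.exp (-(k*t)) := by rw [hwdef]
      _ ≤ w T * Real.exp (-(k*t)) := h2
  -- squeeze: ‖x t‖² → 0
  have hkpos : 0 < k := by rw [hkdef]; positivity
  have hub : Tendsto (fun t : ℝ => w T * Real.exp (-(k*t))) atTop (nhds 0) := by
    rw [show (0:ℝ) = w T * 0 by ring]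
    have hkt : Tendsto (fun t : ℝ => k*t) atTop atTop :=
      Tendsto.const_mul_atTop hkpos tendsto_id
    exact (Real.tendsto_exp_neg_atTop_nhds_zero.comp hkt).const_mul _
  have hsq : Tendsto (fun t : ℝ => (x t 0)^2 + (x t 1)^2) atTop (nhds 0) := by
    apply tendsto_of_tendsto_of_tendsto_of_le_of_le' tendsto_const_nhds hub
    · filter_upwards with t; positivity
    · filter_upwards [eventually_ge_atTop T] with t ht
      exact le_trans (hVlb t) (hVub t ht)
  have hxnorm : Tendsto (fun t : ℝ => ‖x t‖) atTop (nhds 0) := by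
    have hs := (Real.continuous_sqrt.tendsto' 0 0 (by simp)).comp hsq
    refine hs.congr ?_
    intro t
    rw [Function.comp_apply, ← norm_sq_E2, Real.sqrt_sq (norm_nonneg _)]
  have hxt : Tendsto x atTop (nhds 0) := by
    rw [tendsto_zero_iff_norm_tendsto_zero]
    exact hxnorm
  exact hxt.prodMk_nhds (hz1t.prodMk_nhds hz2t)
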